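/- Let 𝔤 be a finite-dimensional complex Lie algebra and let 𝔫_ℝ be a real Lie subalgebra of 𝔤 (𝔤 viewed as a real Lie algebra by restriction of scalars) such that ad(n) : 𝔤 → 𝔤 is a nilpotent endomorphism for every n ∈ 𝔫_ℝ. Write i𝔫_ℝ = {i·m : m ∈ 𝔫_ℝ}, where i is the imaginary unit acting by complex scalar multiplication. Let X ∈ 𝔤 satisfy ⁅n, X⁆ ∈ i𝔫_ℝ for every n ∈ 𝔫_ℝ, and suppose the real-linear map 𝔫_ℝ → 𝔤, n ↦ ⁅n, X⁆, is injective. Then for every Y ∈ X + i𝔫_ℝ there exist finitely many elements n₁, …, n_r ∈ 𝔫_ℝ such that exp(ad n₁) ∘ ⋯ ∘ exp(ad n_r) (X) = Y. -/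

import Mathlib

open LieAlgebra

/-- The exponential of a nilpotent endomorphism over a field of characteristic zero:
the finite sum `∑ i, N^i / i!` (all terms with `i ≥ nilpotencyClass N` vanish when `N`
is nilpotent). -/
noncomputable def expNil {k V : Type*} [Field k] [AddCommGroup V] [Module k V]
    (N : Module.End k V) : Module.End k V :=
  ∑ i ∈ Finset.range (nilpotencyClass N), ((i.factorial : k)⁻¹) • N ^ i

lemma expNil_apply_eq_sum {k V : Type*} [Field k] [AddCommGroup V] [Module k V]
    (N : Module.End k V) (hN : IsNilpotent N) {b : ℕ} (hb : nilpotencyClass N ≤ b) (v : V) :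
    expNil N v = ∑ j ∈ Finset.range b, ((j.factorial : k)⁻¹) • (N ^ j) v := by
  have hzero : ∀ j ∈ Finset.range b, j ∉ Finset.range (nilpotencyClass N) →
      ((j.factorial : k)⁻¹) • (N ^ j) v = 0 := by
    intro j _ hj
    have hle : nilpotencyClass N ≤ j := by simpa using hj
    have hpow : N ^ j = 0 := by
      calc N ^ j = N ^ nilpotencyClass N * N ^ (j - nilpotencyClass N) := by
            rw [← pow_add]; congr 1; omega
        _ = 0 := by rw [pow_nilpotencyClass hN, zero_mul]
    simp [hpow]
  have := Finset.sum_subset (Finset.range_subset_range.mpr hb) hzero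
  rw [expNil, LinearMap.sum_apply]
  simp only [LinearMap.smul_apply] at this ⊢
  exact this

/-- Let `𝔤` be a finite-dimensional complex Lie algebra, and `𝔫ℝ` a real Lie
subalgebra of `𝔤` (viewed as a real Lie algebra by restriction of scalars) all of whose
elements are ad-nilpotent.  If `X ∈ 𝔤` satisfies `⁅n, X⁆ ∈ i·𝔫ℝ` for every `n ∈ 𝔫ℝ` and
`n ↦ ⁅n, X⁆` is injective on `𝔫ℝ`, then every `Y ∈ X + i·𝔫ℝ` is of the form
`exp(ad n₁) ∘ ⋯ ∘ exp(ad n_r) (X)` with all `nᵢ ∈ 𝔫ℝ`. -/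
theorem orbit_contains_imaginary_affine_subspace
    {𝔤 : Type*} [LieRing 𝔤] [LieAlgebra ℂ 𝔤] [LieAlgebra ℝ 𝔤] [IsScalarTower ℝ ℂ 𝔤]
    [FiniteDimensional ℂ 𝔤]
    (𝔫ℝ : LieSubalgebra ℝ 𝔤)
    (hnil : ∀ n ∈ 𝔫ℝ, IsNilpotent (ad ℂ 𝔤 n))
    (X : 𝔤)
    (hstab : ∀ n ∈ 𝔫ℝ, ∃ m ∈ 𝔫ℝ, ⁅n, X⁆ = Complex.I • m)
    (hinj : Function.Injective fun n : 𝔫ℝ => ⁅(n : 𝔤), X⁆) :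
    ∀ m ∈ 𝔫ℝ,
      ∃ l : List 𝔤, (∀ n ∈ l, n ∈ 𝔫ℝ) ∧
        (l.map fun n => expNil (ad ℂ 𝔤 n)).prod X = X + Complex.I • m := by
  classical
  haveI : FiniteDimensional ℝ 𝔤 := FiniteDimensional.trans ℝ ℂ 𝔤
  haveI : FiniteDimensional ℝ 𝔫ℝ :=
    inferInstanceAs (FiniteDimensional ℝ 𝔫ℝ.toSubmodule)
  -- injectivity of multiplication by I
  have hIinj : ∀ {x y : 𝔤}, Complex.I • x = Complex.I • y → x = y := by
    intro x y h
    have h2 := congrArg (fun z : 𝔤 => (Complex.I)⁻¹ • z) h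
    simpa [smul_smul, inv_mul_cancel₀ Complex.I_ne_zero] using h2
  -- real scalars vs complex scalars
  have hsmulRC : ∀ (r : ℝ) (x : 𝔤), ((r : ℂ)) • x = r • x := by
    intro r x
    rw [show ((r : ℂ)) = algebraMap ℝ ℂ r from rfl, algebraMap_smul]
  have hswap : ∀ (r : ℝ) (x : 𝔤), r • (Complex.I • x) = Complex.I • (r • x) := by
    intro r x
    rw [← hsmulRC, ← hsmulRC, smul_smul, smul_smul, mul_comm]
  -- the map θ
  have hex : ∀ n : 𝔫ℝ, ∃ m : 𝔫ℝ, ⁅(n : 𝔤), X⁆ = Complex.I • (m : 𝔤) := by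
    intro n
    obtain ⟨m, hm, h⟩ := hstab n n.2
    exact ⟨⟨m, hm⟩, h⟩
  choose θ0 hθ0 using hex
  have θadd : ∀ a b : 𝔫ℝ, θ0 (a + b) = θ0 a + θ0 b := by
    intro a b
    apply Subtype.ext
    apply hIinj
    rw [← hθ0 (a + b)]
    have h1 : ((a + b : 𝔫ℝ) : 𝔤) = (a : 𝔤) + (b : 𝔤) := rfl
    have h2 : ((θ0 a + θ0 b : 𝔫ℝ) : 𝔤) = (θ0 a : 𝔤) + (θ0 b : 𝔤) := rfl
    rw [h1, h2, add_lie, hθ0 a, hθ0 b, smul_add]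
  have θsmul : ∀ (r : ℝ) (a : 𝔫ℝ), θ0 (r • a) = r • θ0 a := by
    intro r a
    apply Subtype.ext
    apply hIinj
    rw [← hθ0 (r • a)]
    have h1 : ((r • a : 𝔫ℝ) : 𝔤) = r • (a : 𝔤) := rfl
    have h2 : ((r • θ0 a : 𝔫ℝ) : 𝔤) = r • (θ0 a : 𝔤) := rfl
    rw [h1, h2, smul_lie, hθ0 a, hswap]
  let Θ : 𝔫ℝ →ₗ[ℝ] 𝔫ℝ :=
    { toFun := θ0, map_add' := θadd, map_smul' := θsmul }
  have hθ : ∀ n : 𝔫ℝ, ⁅(n : 𝔤), X⁆ = Complex.I • (Θ n : 𝔤) := hθ0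
  have hΘinj : Function.Injective Θ := by
    intro a b h
    apply hinj
    show ⁅(a : 𝔤), X⁆ = ⁅(b : 𝔤), X⁆
    rw [hθ a, hθ b, h]
  -- the derivation identity
  have hder : ∀ a b : 𝔫ℝ, Θ ⁅a, b⁆ = ⁅a, Θ b⁆ - ⁅b, Θ a⁆ := by
    intro a b
    apply Subtype.ext
    apply hIinj
    rw [← hθ ⁅a, b⁆]
    have h1 : ((⁅a, b⁆ : 𝔫ℝ) : 𝔤) = ⁅(a : 𝔤), (b : 𝔤)⁆ := rfl
    have h2 : ((⁅a, Θ b⁆ - ⁅b, Θ a⁆ : 𝔫ℝ) : 𝔤)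
        = ⁅(a : 𝔤), (Θ b : 𝔤)⁆ - ⁅(b : 𝔤), (Θ a : 𝔤)⁆ := rfl
    rw [h1, h2, lie_lie, hθ a, hθ b, lie_smul, lie_smul, smul_sub]
  -- the lower central series
  set L : ℕ → LieIdeal ℝ ↥𝔫ℝ := fun k => LieModule.lowerCentralSeries ℝ ↥𝔫ℝ ↥𝔫ℝ k with hL
  have hLzero : L 0 = ⊤ := LieModule.lowerCentralSeries_zero ℝ ↥𝔫ℝ ↥𝔫ℝ
  have hLsucc : ∀ k, L (k + 1) = ⁅(⊤ : LieIdeal ℝ ↥𝔫ℝ), L k⁆ := fun k =>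
    LieModule.lowerCentralSeries_succ ℝ ↥𝔫ℝ ↥𝔫ℝ k
  -- Θ preserves the lower central series
  have hmapθ : ∀ k, ∀ x ∈ L k, Θ x ∈ L k := by
    intro k
    induction k with
    | zero =>
      intro x _
      rw [hLzero]
      exact LieSubmodule.mem_top _
    | succ k ih =>
      intro x hx
      have hx' : x ∈ ⁅(⊤ : LieIdeal ℝ 𝔫ℝ), L k⁆ := by
        rwa [hLsucc] at hx
      rw [← LieSubmodule.mem_toSubmodule, LieSubmodule.lieIdeal_oper_eq_linear_span'] at hx'
      have goal : Θ x ∈ ⁅(⊤ : LieIdeal ℝ 𝔫ℝ), L k⁆ := by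
        refine Submodule.span_induction ?_ ?_ ?_ ?_ hx'
        · rintro y ⟨u, -, v, hv, rfl⟩
          rw [hder u v]
          refine sub_mem ?_ ?_
          · exact LieSubmodule.lie_mem_lie (LieSubmodule.mem_top u) (ih _ hv)
          · rw [← lie_skew]
            exact neg_mem (LieSubmodule.lie_mem_lie (LieSubmodule.mem_top (Θ u)) hv)
        · simp
        · intro y z _ _ hy hz
          rw [map_add]
          exact add_mem hy hz
        · intro r y _ hy
          rw [map_smul]
          exact Submodule.smul_mem _ _ hy
      rw [hLsucc]
      exact goal
  -- Θ is bijective on each L k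
  have hsurj : ∀ k, ∀ c ∈ L k, ∃ n ∈ L k, Θ n = c := by
    intro k c hc
    have hle : Submodule.map Θ (LieSubmodule.toSubmodule (L k)) ≤ (LieSubmodule.toSubmodule (L k)) := by
      rintro _ ⟨y, hy, rfl⟩
      exact hmapθ k y hy
    have hrk : Module.finrank ℝ ((LieSubmodule.toSubmodule (L k))) =
        Module.finrank ℝ (Submodule.map Θ (LieSubmodule.toSubmodule (L k))) :=
      LinearEquiv.finrank_eq (Submodule.equivMapOfInjective Θ hΘinj _)
    have heq : Submodule.map Θ (LieSubmodule.toSubmodule (L k)) = (LieSubmodule.toSubmodule (L k)) :=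
      Submodule.eq_of_le_of_finrank_le hle hrk.le
    have hc' : c ∈ Submodule.map Θ (LieSubmodule.toSubmodule (L k)) := by
      rw [heq]; exact hc
    obtain ⟨n, hn, hn2⟩ := hc'
    exact ⟨n, hn, hn2⟩
  -- 𝔫ℝ is nilpotent (Engel)
  have hnilL : ∀ x : 𝔫ℝ, IsNilpotent (ad ℝ 𝔫ℝ x) := by
    intro x
    obtain ⟨c, hc⟩ := hnil x x.2
    refine ⟨c, ?_⟩
    ext y
    have key : ∀ j, ((((ad ℝ 𝔫ℝ x) ^ j) y : 𝔫ℝ) : 𝔤) = ((ad ℂ 𝔤 (x : 𝔤)) ^ j) (y : 𝔤) := by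
      intro j
      induction j with
      | zero => simp
      | succ j ih =>
        rw [pow_succ', pow_succ', Module.End.mul_apply, Module.End.mul_apply, ad_apply, ad_apply,
          LieSubalgebra.coe_bracket, ih]
    have h0 := key c
    rw [hc] at h0
    simp only [LinearMap.zero_apply] at h0 ⊢
    simpa using h0
  haveI : IsNoetherian ℝ 𝔫ℝ := inferInstance
  haveI hLieNil : LieRing.IsNilpotent 𝔫ℝ := (LieAlgebra.isNilpotent_iff_forall (R := ℝ)).mpr hnilL
  obtain ⟨p, hp⟩ := (LieModule.isNilpotent_iff ℝ 𝔫ℝ 𝔫ℝ).mp inferInstance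
  have hLp : L p = ⊥ := hp
  -- the key exponential step
  have hstep : ∀ (k : ℕ) (n a : 𝔫ℝ), n ∈ L k → ∃ δ : 𝔫ℝ, δ ∈ L (k + 1) ∧
      expNil (ad ℂ 𝔤 (n : 𝔤)) (X + Complex.I • (a : 𝔤))
        = X + Complex.I • ((a + Θ n + δ : 𝔫ℝ) : 𝔤) := by
    intro k n a hn
    set v : 𝔤 := X + Complex.I • (a : 𝔤) with hv
    set N : Module.End ℂ 𝔤 := ad ℂ 𝔤 (n : 𝔤) with hNdef
    have hNnil : IsNilpotent N := hnil _ n.2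
    set f : ℕ → 𝔫ℝ := fun j => (fun z => ⁅n, z⁆)^[j] (Θ n + ⁅n, a⁆) with hfdef
    have hf0 : f 0 = Θ n + ⁅n, a⁆ := rfl
    have hfs : ∀ j, f (j + 1) = ⁅n, f j⁆ := fun j => Function.iterate_succ_apply' _ _ _
    have hpow : ∀ j, (N ^ (j + 1)) v = Complex.I • ((f j : 𝔫ℝ) : 𝔤) := by
      intro j
      induction j with
      | zero =>
        rw [pow_one, hNdef, ad_apply, hv, lie_add, lie_smul, hθ n, hf0]
        have hco : ((Θ n + ⁅n, a⁆ : 𝔫ℝ) : 𝔤) = (Θ n : 𝔤) + ⁅(n : 𝔤), (a : 𝔤)⁆ := rfl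
        rw [hco, smul_add]
      | succ j ih =>
        rw [pow_succ', Module.End.mul_apply, ih, hNdef, ad_apply, lie_smul, hfs j]
        have hco : ((⁅n, f j⁆ : 𝔫ℝ) : 𝔤) = ⁅(n : 𝔤), ((f j : 𝔫ℝ) : 𝔤)⁆ := rfl
        rw [hco]
    have hfmem : ∀ j, 1 ≤ j → f j ∈ L (k + 1) := by
      intro j hj
      obtain ⟨i, rfl⟩ : ∃ i, j = i + 1 := ⟨j - 1, by omega⟩
      rw [hfs i, hLsucc, ← lie_skew]
      exact neg_mem (LieSubmodule.lie_mem_lie (LieSubmodule.mem_top _) hn)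
    set b : ℕ := max (nilpotencyClass N) 2 with hbdef
    have hb2 : 2 ≤ b := le_max_right _ _
    have hexp := expNil_apply_eq_sum N hNnil (le_max_left _ 2) v
    have hsplit : ∑ j ∈ Finset.range b, ((j.factorial : ℂ)⁻¹) • (N ^ j) v
        = v + ∑ j ∈ Finset.range (b - 1), (((j + 1).factorial : ℂ)⁻¹) • ((N ^ (j + 1)) v) := by
      conv_lhs => rw [show b = (b - 1) + 1 by omega]
      rw [Finset.sum_range_succ']
      simp only [Nat.factorial_zero, Nat.cast_one, inv_one, pow_zero, one_smul,
        Module.End.one_apply]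
      abel
    set S : 𝔫ℝ := ∑ j ∈ Finset.range (b - 1), (((j + 1).factorial : ℝ)⁻¹) • f j with hSdef
    have hcoeS : ((S : 𝔫ℝ) : 𝔤)
        = ∑ j ∈ Finset.range (b - 1), (((j + 1).factorial : ℝ)⁻¹) • ((f j : 𝔫ℝ) : 𝔤) := by
      rw [hSdef]
      rw [AddSubmonoidClass.coe_finset_sum]
      exact Finset.sum_congr rfl fun i _ => rfl
    have hsum : ∑ j ∈ Finset.range (b - 1), (((j + 1).factorial : ℂ)⁻¹) • ((N ^ (j + 1)) v)
        = Complex.I • ((S : 𝔫ℝ) : 𝔤) := by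
      rw [hcoeS, Finset.smul_sum]
      refine Finset.sum_congr rfl ?_
      intro j _
      rw [hpow j, ← hswap]
      have hcast : (((j + 1).factorial : ℂ))⁻¹ = (((((j + 1).factorial : ℝ))⁻¹ : ℝ) : ℂ) := by
        push_cast
        ring
      rw [hcast, hsmulRC]
    refine ⟨S - Θ n, ?_, ?_⟩
    · have hrange : Finset.range (b - 1) = insert 0 (Finset.Ico 1 (b - 1)) := by
        ext i
        simp only [Finset.mem_range, Finset.mem_insert, Finset.mem_Ico]
        omega
      have hS' : S = f 0 + ∑ j ∈ Finset.Ico 1 (b - 1), (((j + 1).factorial : ℝ)⁻¹) • f j := by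
        rw [hSdef, hrange, Finset.sum_insert (by simp)]
        norm_num
      have : S - Θ n = ⁅n, a⁆ + ∑ j ∈ Finset.Ico 1 (b - 1), (((j + 1).factorial : ℝ)⁻¹) • f j := by
        rw [hS', hf0]
        abel
      rw [this]
      refine add_mem ?_ (Submodule.sum_mem _ fun j hj => Submodule.smul_mem _ _
        (hfmem j (Finset.mem_Ico.mp hj).1))
      rw [hLsucc, ← lie_skew]
      exact neg_mem (LieSubmodule.lie_mem_lie (LieSubmodule.mem_top _) hn)
    · have hfin : ((a + Θ n + (S - Θ n) : 𝔫ℝ) : 𝔤) = (a : 𝔤) + (S : 𝔤) := by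
        have h1 : a + Θ n + (S - Θ n) = a + S := by abel
        rw [h1]
        rfl
      rw [hexp, hsplit, hsum, hfin, hv, smul_add]
      abel
  -- the main downward induction
  have key : ∀ (j k : ℕ), p ≤ k + j → ∀ a c : 𝔫ℝ, c ∈ L k →
      ∃ l : List 𝔤, (∀ x ∈ l, x ∈ 𝔫ℝ) ∧
        (l.map fun n => expNil (ad ℂ 𝔤 n)).prod (X + Complex.I • (a : 𝔤))
          = X + Complex.I • ((a + c : 𝔫ℝ) : 𝔤) := by
    intro j
    induction j with
    | zero =>
      intro k hk a c hc
      have hle : L k ≤ L p := LieModule.antitone_lowerCentralSeries ℝ 𝔫ℝ 𝔫ℝ (by omega)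
      rw [hLp] at hle
      have hc0 : c = 0 := by
        have := hle hc
        rwa [LieSubmodule.mem_bot] at this
      refine ⟨[], by simp, ?_⟩
      simp [hc0]
    | succ j ih =>
      intro k hk a c hc
      obtain ⟨n, hnk, hΘn⟩ := hsurj k c hc
      obtain ⟨δ, hδ, heq⟩ := hstep k n a hnk
      rw [hΘn] at heq
      obtain ⟨l', hl'mem, hl'⟩ := ih (k + 1) (by omega) (a + c + δ) (-δ) (neg_mem hδ)
      refine ⟨l' ++ [(n : 𝔤)], ?_, ?_⟩
      · intro x hx
        rcases List.mem_append.mp hx with h | h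
        · exact hl'mem x h
        · rw [List.mem_singleton] at h
          exact h ▸ n.2
      · rw [List.map_append, List.prod_append]
        simp only [List.map_cons, List.map_nil, List.prod_cons, List.prod_nil, mul_one]
        rw [Module.End.mul_apply, heq, hl']
        have : a + c + δ + -δ = a + c := by abel
        rw [this]
  -- conclusion
  intro m hm
  obtain ⟨l, h1, h2⟩ := key p 0 (by omega) 0 ⟨m, hm⟩ (by rw [hLzero]; exact LieSubmodule.mem_top _)
  refine ⟨l, h1, ?_⟩
  simp only [ZeroMemClass.coe_zero, smul_zero, add_zero, zero_add] at h2
  exact h2
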